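/- Let A be an M×M complex Hermitian positive semidefinite matrix, b ∈ ℂ^M, and P > 0 a real number. If there exists μ₀ > 0 with ‖(A + μ₀·I)⁻¹ b‖² > P, then there exists μ ≥ μ₀ with ‖(A + μ·I)⁻¹ b‖² = P, where ‖·‖ is the Euclidean norm on ℂ^M. -/

import Mathlib

open Matrix
open scoped ComplexOrder

private lemma smul_one_posDef {M : ℕ} {μ : ℝ} (hμ : 0 < μ) :
    ((μ : ℂ) • (1 : Matrix (Fin M) (Fin M) ℂ)).PosDef := by
  refine Matrix.posDef_iff_dotProduct_mulVec.mpr ⟨?_, ?_⟩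
  · unfold Matrix.IsHermitian
    rw [conjTranspose_smul]
    simp [Complex.conj_ofReal]
  · intro x hx
    rw [smul_mulVec, one_mulVec, dotProduct_smul, smul_eq_mul]
    have h1 : (0 : ℂ) < (μ : ℂ) := by
      rw [Complex.lt_def]
      simp [hμ]
    exact mul_pos h1 (Matrix.dotProduct_star_self_pos_iff.mpr hx)

private noncomputable def bfF {M : ℕ} (A : Matrix (Fin M) (Fin M) ℂ) (b : Fin M → ℂ)
    (μ : ℝ) : ℝ :=
  ‖((WithLp.equiv 2 (Fin M → ℂ)).symm
      ((A + (μ : ℂ) • (1 : Matrix (Fin M) (Fin M) ℂ))⁻¹ *ᵥ b) :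
    EuclideanSpace ℂ (Fin M))‖ ^ 2

/-- Existence of a dual variable meeting the power constraint with equality: for
Hermitian PSD `A`, `b ∈ ℂ^M` and `P > 0`, if some `μ₀ > 0` has `‖(A + μ₀I)⁻¹ b‖² > P`,
then some `μ ≥ μ₀` achieves `‖(A + μI)⁻¹ b‖² = P` (Euclidean norm). -/
theorem beamformer_power_bisection {M : ℕ} (A : Matrix (Fin M) (Fin M) ℂ)
    (hA : A.IsHermitian) (hApsd : A.PosSemidef) (b : Fin M → ℂ)
    (P : ℝ) (hP : 0 < P) (μ₀ : ℝ) (hμ₀ : 0 < μ₀)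
    (h₀ : P < ‖((WithLp.equiv 2 (Fin M → ℂ)).symm
        ((A + (μ₀ : ℂ) • (1 : Matrix (Fin M) (Fin M) ℂ))⁻¹ *ᵥ b) :
      EuclideanSpace ℂ (Fin M))‖ ^ 2) :
    ∃ μ : ℝ, μ₀ ≤ μ ∧
      ‖((WithLp.equiv 2 (Fin M → ℂ)).symm
          ((A + (μ : ℂ) • (1 : Matrix (Fin M) (Fin M) ℂ))⁻¹ *ᵥ b) :
        EuclideanSpace ℂ (Fin M))‖ ^ 2 = P := by
  classical
  set e : (Fin M → ℂ) → EuclideanSpace ℂ (Fin M) := fun x => ((WithLp.equiv 2 (Fin M → ℂ)).symm x : EuclideanSpace ℂ (Fin M)) with he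
  -- positive definiteness
  have hpd : ∀ μ : ℝ, 0 < μ → (A + (μ : ℂ) • (1 : Matrix (Fin M) (Fin M) ℂ)).PosDef :=
    fun μ hμ => Matrix.PosDef.posSemidef_add hApsd (smul_one_posDef hμ)
  have hdet : ∀ μ : ℝ, 0 < μ →
      (A + (μ : ℂ) • (1 : Matrix (Fin M) (Fin M) ℂ)).det ≠ 0 :=
    fun μ hμ => (hpd μ hμ).det_pos.ne'
  -- the matrix times its inverse applied to b
  have hmul : ∀ μ : ℝ, 0 < μ →
      (A + (μ : ℂ) • (1 : Matrix (Fin M) (Fin M) ℂ)) *ᵥ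
        ((A + (μ : ℂ) • (1 : Matrix (Fin M) (Fin M) ℂ))⁻¹ *ᵥ b) = b := by
    intro μ hμ
    rw [Matrix.mulVec_mulVec, Matrix.mul_nonsing_inv _ (isUnit_iff_ne_zero.mpr (hdet μ hμ)),
      Matrix.one_mulVec]
  -- norm bound:  bfF A b μ ≤ (‖e b‖ / μ)^2
  set B : ℝ := ‖e b‖ with hB
  have hbound : ∀ μ : ℝ, 0 < μ → bfF A b μ ≤ (B / μ) ^ 2 := by
    intro μ hμ
    set v : Fin M → ℂ := (A + (μ : ℂ) • (1 : Matrix (Fin M) (Fin M) ℂ))⁻¹ *ᵥ b with hv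
    have hcsq : μ * ‖e v‖ ^ 2 ≤ ‖e v‖ * B := by
      have h1 : star v ⬝ᵥ b = star v ⬝ᵥ (A *ᵥ v) + (μ : ℂ) * (star v ⬝ᵥ v) := by
        conv_lhs => rw [← hmul μ hμ]
        rw [add_mulVec, dotProduct_add, smul_mulVec, one_mulVec, dotProduct_smul,
          smul_eq_mul]
      have hre : μ * ‖e v‖ ^ 2 ≤ (star v ⬝ᵥ b).re := by
        have hA0 : 0 ≤ (star v ⬝ᵥ (A *ᵥ v)).re := by
          have := hApsd.dotProduct_mulVec_nonneg v
          rw [Complex.le_def] at this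
          simpa using this.1
        have hvv : (star v ⬝ᵥ v).re = ‖e v‖ ^ 2 := by
          have : (inner ℂ (e v) (e v) : ℂ) = star v ⬝ᵥ v :=
            (EuclideanSpace.inner_toLp_toLp v v).trans (dotProduct_comm _ _)
          rw [← this]
          exact inner_self_eq_norm_sq (𝕜 := ℂ) (e v)
        rw [h1, Complex.add_re, Complex.re_ofReal_mul, hvv]
        linarith
      have hcs : (star v ⬝ᵥ b).re ≤ ‖e v‖ * B := by
        have h2 : (inner ℂ (e v) (e b) : ℂ) = star v ⬝ᵥ b :=
          (EuclideanSpace.inner_toLp_toLp v b).trans (dotProduct_comm _ _)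
        calc (star v ⬝ᵥ b).re = Complex.re (inner ℂ (e v) (e b) : ℂ) := by rw [h2]
          _ ≤ ‖(inner ℂ (e v) (e b) : ℂ)‖ := Complex.re_le_norm _
          _ ≤ ‖e v‖ * ‖e b‖ := norm_inner_le_norm _ _
      linarith
    have hnv : ‖e v‖ ≤ B / μ := by
      rcases eq_or_lt_of_le (norm_nonneg (e v)) with h | h
      · rw [← h]; positivity
      · rw [le_div_iff₀ hμ]
        nlinarith [hcsq, h]
    have : bfF A b μ = ‖e v‖ ^ 2 := rfl
    rw [this]
    exact pow_le_pow_left₀ (norm_nonneg _) hnv 2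
  -- choose μ₁
  set μ₁ : ℝ := max μ₀ ((B + 1) / Real.sqrt P) with hμ₁def
  have hμ₀₁ : μ₀ ≤ μ₁ := le_max_left _ _
  have hμ₁pos : 0 < μ₁ := lt_of_lt_of_le hμ₀ hμ₀₁
  have hsP : 0 < Real.sqrt P := Real.sqrt_pos.mpr hP
  have hBnn : 0 ≤ B := norm_nonneg _
  have hf1 : bfF A b μ₁ < P := by
    have h1 : (B + 1) / Real.sqrt P ≤ μ₁ := le_max_right _ _
    have h2 : B + 1 ≤ μ₁ * Real.sqrt P := (div_le_iff₀ hsP).mp h1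
    have h3 : B / μ₁ < Real.sqrt P := by
      rw [div_lt_iff₀ hμ₁pos]
      nlinarith
    have h4 : (B / μ₁) ^ 2 < P := by
      have := pow_lt_pow_left₀ h3 (div_nonneg hBnn hμ₁pos.le) (by norm_num : 2 ≠ 0)
      rwa [Real.sq_sqrt hP.le] at this
    exact lt_of_le_of_lt (hbound μ₁ hμ₁pos) h4
  -- continuity of bfF on [μ₀, μ₁]
  have hcont : ContinuousOn (bfF A b) (Set.Icc μ₀ μ₁) := by
    have hg : Continuous (fun μ : ℝ => A + (μ : ℂ) • (1 : Matrix (Fin M) (Fin M) ℂ)) :=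
      continuous_const.add (Complex.continuous_ofReal.smul continuous_const)
    have hinv : ContinuousOn
        (fun μ : ℝ => (A + (μ : ℂ) • (1 : Matrix (Fin M) (Fin M) ℂ))⁻¹)
        (Set.Icc μ₀ μ₁) := by
      have heq : (fun μ : ℝ => (A + (μ : ℂ) • (1 : Matrix (Fin M) (Fin M) ℂ))⁻¹) =
          fun μ : ℝ => ((A + (μ : ℂ) • (1 : Matrix (Fin M) (Fin M) ℂ)).det)⁻¹ •
            (A + (μ : ℂ) • (1 : Matrix (Fin M) (Fin M) ℂ)).adjugate := by
        funext μ
        rw [Matrix.inv_def, Ring.inverse_eq_inv']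
      rw [heq]
      refine ContinuousOn.smul (ContinuousOn.inv₀ hg.matrix_det.continuousOn ?_)
        hg.matrix_adjugate.continuousOn
      intro μ hμ
      exact hdet μ (lt_of_lt_of_le hμ₀ hμ.1)
    have hmulb : Continuous (fun N : Matrix (Fin M) (Fin M) ℂ => N *ᵥ b) :=
      continuous_id.matrix_mulVec continuous_const
    have hmv : ContinuousOn
        (fun μ : ℝ => (A + (μ : ℂ) • (1 : Matrix (Fin M) (Fin M) ℂ))⁻¹ *ᵥ b)
        (Set.Icc μ₀ μ₁) := hmulb.comp_continuousOn hinv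
    have hE : Continuous e := PiLp.continuous_toLp 2 (fun _ : Fin M => ℂ)
    exact ((continuous_norm.comp hE).comp_continuousOn hmv).pow 2
  -- intermediate value theorem
  have hP0 : P < bfF A b μ₀ := h₀
  have hmem : P ∈ Set.Icc (bfF A b μ₁) (bfF A b μ₀) := ⟨hf1.le, hP0.le⟩
  obtain ⟨μ, hμmem, hμeq⟩ := intermediate_value_Icc' hμ₀₁ hcont hmem
  exact ⟨μ, hμmem.1, hμeq⟩
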